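/- arXiv:1607.07276 — 4 statements merged into one kernel-verified Lean document; each statement's English description precedes it below -/
import Mathlib

section
/- For any finite subsets F of Ĝ and any γ ∈ Ĝ, the weighted cardinality of the boundary satisfies |∂_γ̄(F)|_w ≤ d_γ² |∂_γ(F)|_w. -/
/-- The boundary `∂_γ(F)` of a finite set `F ⊆ Ĝ` relative to `γ`:
`{α ∈ F : ∃ β ∉ F, N^β_{α,γ} > 0} ∪ {α ∉ F : ∃ β ∈ F, N^β_{α,γ} > 0}`. -/
def bdry {ι : Type*} (N : ι → ι → ι → ℕ) (γ : ι) (F : Finset ι) : Set ι :=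
  {α | α ∈ F ∧ ∃ β ∉ F, N α γ β ≠ 0} ∪ {α | α ∉ F ∧ ∃ β ∈ F, N α γ β ≠ 0}

/-- For any finite subset `F` of `Ĝ` and any `γ ∈ Ĝ`, the weighted cardinality of the
boundary satisfies `|∂_γ̄(F)|_w ≤ d_γ² |∂_γ(F)|_w`. -/
theorem stmt15 {ι : Type*} (N : ι → ι → ι → ℕ) (d : ι → ℕ) (conj : ι → ι)
    (hd : ∀ α, 0 < d α)
    (hdconj : ∀ γ, d (conj γ) = d γ)
    (hfrob : ∀ α γ β, N α (conj γ) β = N β γ α)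
    (hfin : ∀ α γ, {β | N α γ β ≠ 0}.Finite)
    (hfin' : ∀ γ β, {α | N α γ β ≠ 0}.Finite)
    (hdim : ∀ α γ, ∀ S : Finset ι, (∀ β, N α γ β ≠ 0 → β ∈ S) →
      d α * d γ = ∑ β ∈ S, N α γ β * d β)
    (γ : ι) (F : Finset ι)
    (h1 : (bdry N γ F).Finite) (h2 : (bdry N (conj γ) F).Finite) :
    ∑ α ∈ h2.toFinset, (d α) ^ 2 ≤ (d γ) ^ 2 * ∑ α ∈ h1.toFinset, (d α) ^ 2 := by
  classical
  set A := h1.toFinset with hA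
  set B := h2.toFinset with hB
  -- Each α ∈ B admits β ∈ A with N β γ α ≠ 0.
  have key : ∀ α ∈ B, ∃ β ∈ A, N β γ α ≠ 0 := by
    intro α hα
    rw [hB, Set.Finite.mem_toFinset] at hα
    rcases hα with ⟨hαF, β, hβF, hN⟩ | ⟨hαF, β, hβF, hN⟩
    · refine ⟨β, ?_, by rwa [hfrob] at hN⟩
      rw [hA, Set.Finite.mem_toFinset]
      exact Or.inr ⟨hβF, α, hαF, by rwa [hfrob] at hN⟩
    · refine ⟨β, ?_, by rwa [hfrob] at hN⟩
      rw [hA, Set.Finite.mem_toFinset]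
      exact Or.inl ⟨hβF, α, hαF, by rwa [hfrob] at hN⟩
  -- If N β γ α ≠ 0 then d α ≤ d β * d γ.
  have hle : ∀ β α, N β γ α ≠ 0 → d α ≤ d β * d γ := by
    intro β α hN
    have hS : ∀ β', N β γ β' ≠ 0 → β' ∈ insert α (hfin β γ).toFinset := by
      intro β' h; exact Finset.mem_insert_of_mem ((hfin β γ).mem_toFinset.mpr h)
    rw [hdim β γ _ hS]
    calc d α ≤ N β γ α * d α := Nat.le_mul_of_pos_left _ (Nat.pos_of_ne_zero hN)
      _ ≤ _ := Finset.single_le_sum (f := fun β' => N β γ β' * d β') (fun _ _ => Nat.zero_le _) (Finset.mem_insert_self α _)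
  -- Partial sums of the dimension identity.
  have hsum : ∀ β, ∑ α ∈ B, N β γ α * d α ≤ d β * d γ := by
    intro β
    have hS : ∀ β', N β γ β' ≠ 0 → β' ∈ B ∪ (hfin β γ).toFinset := by
      intro β' h; exact Finset.mem_union_right _ ((hfin β γ).mem_toFinset.mpr h)
    rw [hdim β γ _ hS]
    exact Finset.sum_le_sum_of_subset (Finset.subset_union_left)
  calc ∑ α ∈ B, d α ^ 2
      ≤ ∑ α ∈ B, ∑ β ∈ A, N β γ α * d α ^ 2 := by
        refine Finset.sum_le_sum fun α hα => ?_
        obtain ⟨β, hβA, hN⟩ := key α hα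
        calc d α ^ 2 ≤ N β γ α * d α ^ 2 :=
              Nat.le_mul_of_pos_left _ (Nat.pos_of_ne_zero hN)
          _ ≤ _ := Finset.single_le_sum (f := fun β => N β γ α * d α ^ 2) (fun _ _ => Nat.zero_le _) hβA
    _ = ∑ β ∈ A, ∑ α ∈ B, N β γ α * d α ^ 2 := Finset.sum_comm
    _ ≤ ∑ β ∈ A, d γ ^ 2 * d β ^ 2 := by
        refine Finset.sum_le_sum fun β _ => ?_
        calc ∑ α ∈ B, N β γ α * d α ^ 2
            ≤ ∑ α ∈ B, N β γ α * d α * (d β * d γ) := by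
              refine Finset.sum_le_sum fun α _ => ?_
              rcases eq_or_ne (N β γ α) 0 with h | h
              · simp [h]
              · rw [pow_two, ← mul_assoc]
                exact Nat.mul_le_mul_left _ (hle β α h)
          _ = (∑ α ∈ B, N β γ α * d α) * (d β * d γ) := by
              rw [Finset.sum_mul]
          _ ≤ (d β * d γ) * (d β * d γ) :=
              Nat.mul_le_mul_right _ (hsum β)
          _ = d γ ^ 2 * d β ^ 2 := by ring
    _ = d γ ^ 2 * ∑ β ∈ A, d β ^ 2 := by rw [Finset.mul_sum]
end

section
/- Let γ₁, γ₂ ∈ Ĝ and γ an irreducible contained in γ₁γ₂. Then for any finite subset F, |∂_{γ₁γ₂}(F)|_w ≤ max{d_{γ₁}², d_{γ₂}²} (|∂_{γ₁}(F)|_w + |∂_{γ₂}(F)|_w); consequently, if γ₁ and γ₂ both fix a sequence Σ = {F_n} (i.e., |∂_{γᵢ}(F_n)|_w / |F_n|_w → 0), then every irreducible constituent of γ₁γ₂ also fixes Σ. -/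
open Filter Topology

/-- The boundary `∂_{γ₁γ₂}(F)` of `F` relative to the tensor product `γ₁ γ₂`, using the
multiplicity `N^β_{α,γ₁γ₂} = ∑_η N^η_{α,γ₁} N^β_{η,γ₂}`, which is positive iff
`∃ η, N^η_{α,γ₁} > 0 ∧ N^β_{η,γ₂} > 0`. -/
def bdryProd {ι : Type*} (N : ι → ι → ι → ℕ) (γ₁ γ₂ : ι) (F : Finset ι) : Set ι :=
  {α | α ∈ F ∧ ∃ β ∉ F, ∃ η, N α γ₁ η ≠ 0 ∧ N η γ₂ β ≠ 0} ∪
    {α | α ∉ F ∧ ∃ β ∈ F, ∃ η, N α γ₁ η ≠ 0 ∧ N η γ₂ β ≠ 0}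

lemma sum_union_le' {κ : Type*} [DecidableEq κ] (s t : Finset κ) (f : κ → ℕ) :
    ∑ x ∈ s ∪ t, f x ≤ ∑ x ∈ s, f x + ∑ x ∈ t, f x := by
  rw [← Finset.sum_union_inter]
  exact Nat.le_add_right _ _

lemma sum_biUnion_le' {ι κ : Type*} [DecidableEq κ] (s : Finset ι) (t : ι → Finset κ)
    (f : κ → ℕ) : ∑ x ∈ s.biUnion t, f x ≤ ∑ i ∈ s, ∑ x ∈ t i, f x := by
  classical
  induction s using Finset.induction_on with
  | empty => simp
  | insert _ _ h ih =>
    rw [Finset.biUnion_insert, Finset.sum_insert h]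
    exact le_trans (sum_union_le' _ _ _) (Nat.add_le_add_left ih _)

/-- For `γ₁, γ₂ ∈ Ĝ` one has
`|∂_{γ₁γ₂}(F)|_w ≤ max{d_{γ₁}², d_{γ₂}²} (|∂_{γ₁}(F)|_w + |∂_{γ₂}(F)|_w)`;
consequently, if `γ₁` and `γ₂` both fix `Σ = {F_n}`, then every irreducible constituent
`γ` of `γ₁ γ₂` also fixes `Σ`. -/
theorem stmt16 {ι : Type*} (N : ι → ι → ι → ℕ) (d : ι → ℕ) (conj : ι → ι)
    (hd : ∀ α, 0 < d α)
    (hdconj : ∀ γ, d (conj γ) = d γ)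
    (hfrob : ∀ α γ β, N α γ β = N β (conj γ) α)
    (hfrob' : ∀ α γ β, N α γ β = N (conj α) β γ)
    (hfin : ∀ α γ, {β | N α γ β ≠ 0}.Finite)
    (hfin' : ∀ γ β, {α | N α γ β ≠ 0}.Finite)
    (hdim : ∀ α γ, ∀ S : Finset ι, (∀ β, N α γ β ≠ 0 → β ∈ S) →
      d α * d γ = ∑ β ∈ S, N α γ β * d β)
    (γ₁ γ₂ : ι)
    (hassoc : ∀ α β, (∃ γ, N γ₁ γ₂ γ ≠ 0 ∧ N α γ β ≠ 0) ↔
      (∃ η, N α γ₁ η ≠ 0 ∧ N η γ₂ β ≠ 0))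
    (hbfin : ∀ (γ : ι) (S : Finset ι), (bdry N γ S).Finite)
    (hbfin2 : ∀ S : Finset ι, (bdryProd N γ₁ γ₂ S).Finite)
    (F : ℕ → Finset ι) :
    (∀ S : Finset ι,
        ∑ α ∈ (hbfin2 S).toFinset, (d α) ^ 2 ≤
          max ((d γ₁) ^ 2) ((d γ₂) ^ 2) *
            (∑ α ∈ (hbfin γ₁ S).toFinset, (d α) ^ 2 +
              ∑ α ∈ (hbfin γ₂ S).toFinset, (d α) ^ 2)) ∧
      (Tendsto (fun n => ((∑ α ∈ (hbfin γ₁ (F n)).toFinset, (d α) ^ 2 : ℕ) : ℝ) /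
            ((∑ α ∈ F n, (d α) ^ 2 : ℕ) : ℝ)) atTop (𝓝 0) →
        Tendsto (fun n => ((∑ α ∈ (hbfin γ₂ (F n)).toFinset, (d α) ^ 2 : ℕ) : ℝ) /
            ((∑ α ∈ F n, (d α) ^ 2 : ℕ) : ℝ)) atTop (𝓝 0) →
        ∀ γ : ι, N γ₁ γ₂ γ ≠ 0 →
          Tendsto (fun n => ((∑ α ∈ (hbfin γ (F n)).toFinset, (d α) ^ 2 : ℕ) : ℝ) /
            ((∑ α ∈ F n, (d α) ^ 2 : ℕ) : ℝ)) atTop (𝓝 0)) := by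
  classical
  -- key estimate: weighted size of {α : N α γ₁ η ≠ 0} is at most d γ₁ ^ 2 * d η ^ 2
  have key : ∀ η : ι, ∑ α ∈ (hfin' γ₁ η).toFinset, d α ^ 2 ≤ d γ₁ ^ 2 * d η ^ 2 := by
    intro η
    set A := (hfin' γ₁ η).toFinset with hA
    have hmem : ∀ α, α ∈ A ↔ N α γ₁ η ≠ 0 := by
      intro α; simp [hA]
    have hdim' := hdim η (conj γ₁) A (by
      intro β hβ
      rw [hmem]
      rwa [hfrob β γ₁ η])
    have hsum : ∑ α ∈ A, d α ≤ d η * d γ₁ := by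
      rw [← hdconj γ₁, hdim']
      refine Finset.sum_le_sum ?_
      intro α hα
      have hne : N η (conj γ₁) α ≠ 0 := by
        rw [← hfrob α γ₁ η]; exact (hmem α).mp hα
      exact Nat.le_mul_of_pos_left (d α) (Nat.pos_of_ne_zero hne)
    have hle : ∀ α ∈ A, d α ≤ d η * d γ₁ := fun α hα =>
      le_trans (Finset.single_le_sum (fun _ _ => Nat.zero_le _) hα) hsum
    calc ∑ α ∈ A, d α ^ 2 ≤ ∑ α ∈ A, (d η * d γ₁) * d α := by
          refine Finset.sum_le_sum ?_
          intro α hα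
          rw [sq]
          exact Nat.mul_le_mul_right _ (hle α hα)
      _ = (d η * d γ₁) * ∑ α ∈ A, d α := (Finset.mul_sum _ _ _).symm
      _ ≤ (d η * d γ₁) * (d η * d γ₁) := Nat.mul_le_mul_left _ hsum
      _ = d γ₁ ^ 2 * d η ^ 2 := by ring
  have part1 : ∀ S : Finset ι,
      ∑ α ∈ (hbfin2 S).toFinset, (d α) ^ 2 ≤
        max ((d γ₁) ^ 2) ((d γ₂) ^ 2) *
          (∑ α ∈ (hbfin γ₁ S).toFinset, (d α) ^ 2 +
            ∑ α ∈ (hbfin γ₂ S).toFinset, (d α) ^ 2) := by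
    intro S
    set B1 := (hbfin γ₁ S).toFinset with hB1
    set B2 := (hbfin γ₂ S).toFinset with hB2
    set T := B2.biUnion (fun η => (hfin' γ₁ η).toFinset) with hT
    have hmemT : ∀ α, (∃ η ∈ B2, N α γ₁ η ≠ 0) → α ∈ T := by
      intro α ⟨η, hη, hN⟩
      rw [hT, Finset.mem_biUnion]
      exact ⟨η, hη, by simpa using hN⟩
    have hsub : (hbfin2 S).toFinset ⊆ B1 ∪ T := by
      intro α hα
      rw [Set.Finite.mem_toFinset] at hα
      rw [Finset.mem_union]
      rcases hα with ⟨hαF, β, hβ, η, h1, h2⟩ | ⟨hαF, β, hβ, η, h1, h2⟩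
      · by_cases hη : η ∈ S
        · refine Or.inr (hmemT α ⟨η, ?_, h1⟩)
          rw [hB2, Set.Finite.mem_toFinset]
          exact Or.inl ⟨hη, β, hβ, h2⟩
        · refine Or.inl ?_
          rw [hB1, Set.Finite.mem_toFinset]
          exact Or.inl ⟨hαF, η, hη, h1⟩
      · by_cases hη : η ∈ S
        · refine Or.inl ?_
          rw [hB1, Set.Finite.mem_toFinset]
          exact Or.inr ⟨hαF, η, hη, h1⟩
        · refine Or.inr (hmemT α ⟨η, ?_, h1⟩)
          rw [hB2, Set.Finite.mem_toFinset]
          exact Or.inr ⟨hη, β, hβ, h2⟩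
    have hmax1 : 1 ≤ max ((d γ₁) ^ 2) ((d γ₂) ^ 2) :=
      le_trans (Nat.one_le_pow _ _ (hd γ₁)) (le_max_left _ _)
    calc ∑ α ∈ (hbfin2 S).toFinset, (d α) ^ 2
        ≤ ∑ α ∈ B1 ∪ T, (d α) ^ 2 :=
          Finset.sum_le_sum_of_subset hsub
      _ ≤ ∑ α ∈ B1, (d α) ^ 2 + ∑ α ∈ T, (d α) ^ 2 := sum_union_le' _ _ _
      _ ≤ ∑ α ∈ B1, (d α) ^ 2 + ∑ η ∈ B2, ∑ α ∈ (hfin' γ₁ η).toFinset, (d α) ^ 2 :=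
          Nat.add_le_add_left (sum_biUnion_le' _ _ _) _
      _ ≤ ∑ α ∈ B1, (d α) ^ 2 + ∑ η ∈ B2, d γ₁ ^ 2 * d η ^ 2 :=
          Nat.add_le_add_left (Finset.sum_le_sum fun η _ => key η) _
      _ = ∑ α ∈ B1, (d α) ^ 2 + d γ₁ ^ 2 * ∑ η ∈ B2, d η ^ 2 := by
          rw [Finset.mul_sum]
      _ ≤ max ((d γ₁) ^ 2) ((d γ₂) ^ 2) * ∑ α ∈ B1, (d α) ^ 2 +
            max ((d γ₁) ^ 2) ((d γ₂) ^ 2) * ∑ η ∈ B2, d η ^ 2 :=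
          Nat.add_le_add (Nat.le_mul_of_pos_left _ hmax1)
            (Nat.mul_le_mul_right _ (le_max_left _ _))
      _ = max ((d γ₁) ^ 2) ((d γ₂) ^ 2) *
            (∑ α ∈ B1, (d α) ^ 2 + ∑ η ∈ B2, d η ^ 2) := (mul_add _ _ _).symm
  refine ⟨part1, ?_⟩
  intro h1 h2 γ hγ
  have hsub : ∀ S : Finset ι, (hbfin γ S).toFinset ⊆ (hbfin2 S).toFinset := by
    intro S α hα
    rw [Set.Finite.mem_toFinset] at *
    rcases hα with ⟨h, β, hβ, hN⟩ | ⟨h, β, hβ, hN⟩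
    · exact Or.inl ⟨h, β, hβ, (hassoc α β).mp ⟨γ, hγ, hN⟩⟩
    · exact Or.inr ⟨h, β, hβ, (hassoc α β).mp ⟨γ, hγ, hN⟩⟩
  have hbound : ∀ n, ∑ α ∈ (hbfin γ (F n)).toFinset, (d α) ^ 2 ≤
      max ((d γ₁) ^ 2) ((d γ₂) ^ 2) *
        (∑ α ∈ (hbfin γ₁ (F n)).toFinset, (d α) ^ 2 +
          ∑ α ∈ (hbfin γ₂ (F n)).toFinset, (d α) ^ 2) := fun n =>
    le_trans (Finset.sum_le_sum_of_subset (hsub (F n))) (part1 (F n))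
  have hgoal : Tendsto (fun n =>
      ((max ((d γ₁) ^ 2) ((d γ₂) ^ 2) : ℕ) : ℝ) *
        (((∑ α ∈ (hbfin γ₁ (F n)).toFinset, (d α) ^ 2 : ℕ) : ℝ) /
            ((∑ α ∈ F n, (d α) ^ 2 : ℕ) : ℝ) +
          ((∑ α ∈ (hbfin γ₂ (F n)).toFinset, (d α) ^ 2 : ℕ) : ℝ) /
            ((∑ α ∈ F n, (d α) ^ 2 : ℕ) : ℝ))) atTop (𝓝 0) := by
    have := ((h1.add h2).const_mul ((max ((d γ₁) ^ 2) ((d γ₂) ^ 2) : ℕ) : ℝ))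
    simpa using this
  refine squeeze_zero (fun n => div_nonneg (by positivity) (by positivity)) ?_ hgoal
  intro n
  rcases (Nat.cast_nonneg _ : (0:ℝ) ≤ ((∑ α ∈ F n, (d α) ^ 2 : ℕ) : ℝ)).eq_or_lt with h0 | h0
  · rw [← h0]
    simp
  · rw [← add_div, ← mul_div_assoc]
    refine div_le_div_of_nonneg_right ?_ h0.le
    exact_mod_cast hbound n
end

section
/- The set Ĝ_Σ of irreducible representations fixing Σ is closed under: containing the trivial representation, conjugation (γ ∈ Ĝ_Σ ⟹ γ̄ ∈ Ĝ_Σ), and taking irreducible constituents of tensor products of its elements; hence Ĝ_Σ generates a quantum subgroup. -/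
open Filter Topology

/-- `γ` fixes the sequence `Σ = {F_n}` if `|∂_γ(F_n)|_w / |F_n|_w → 0`, where
`|F|_w = ∑_{α ∈ F} d_α²` is the weighted cardinality. -/
def RepFixes {ι : Type*} (N : ι → ι → ι → ℕ) (d : ι → ℕ) (F : ℕ → Finset ι)
    (hbfin : ∀ (γ : ι) (S : Finset ι), (bdry N γ S).Finite) (γ : ι) : Prop :=
  Tendsto (fun n => ((∑ α ∈ (hbfin γ (F n)).toFinset, (d α) ^ 2 : ℕ) : ℝ) /
    ((∑ α ∈ F n, (d α) ^ 2 : ℕ) : ℝ)) atTop (𝓝 0)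


/-- Double counting: if every element of `A` is related to some element of `B` via `M`,
relation implies dimension bound, and column sums are bounded, then weighted sums compare. -/
lemma key_sum {ι : Type*} (d : ι → ℕ) (M : ι → ι → ℕ) (c : ℕ)
    (A B : Finset ι)
    (hAB : ∀ α ∈ A, ∃ η ∈ B, M α η ≠ 0)
    (hle : ∀ α η, M α η ≠ 0 → d α ≤ c * d η)
    (hcol : ∀ η, ∑ α ∈ A, M α η * d α ≤ c * d η) :
    ∑ α ∈ A, d α ^ 2 ≤ c ^ 2 * ∑ η ∈ B, d η ^ 2 := by
  calc ∑ α ∈ A, d α ^ 2 ≤ ∑ α ∈ A, ∑ η ∈ B, c * d η * (M α η * d α) := by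
        apply Finset.sum_le_sum
        intro α hα
        obtain ⟨η₀, hη₀B, hM⟩ := hAB α hα
        calc d α ^ 2 = d α * d α := sq (d α)
          _ ≤ (c * d η₀) * (M α η₀ * d α) := by
              have h1 : d α ≤ c * d η₀ := hle _ _ hM
              have h2 : d α ≤ M α η₀ * d α :=
                Nat.le_mul_of_pos_left _ (Nat.pos_of_ne_zero hM)
              exact Nat.mul_le_mul h1 h2
          _ ≤ ∑ η ∈ B, c * d η * (M α η * d α) :=
              Finset.single_le_sum (f := fun η => c * d η * (M α η * d α))
                (fun _ _ => Nat.zero_le _) hη₀B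
    _ = ∑ η ∈ B, c * d η * ∑ α ∈ A, M α η * d α := by
        rw [Finset.sum_comm]
        simp [Finset.mul_sum]
    _ ≤ ∑ η ∈ B, c * d η * (c * d η) :=
        Finset.sum_le_sum (fun η _ => Nat.mul_le_mul_left _ (hcol η))
    _ = c ^ 2 * ∑ η ∈ B, d η ^ 2 := by
        rw [Finset.mul_sum]
        apply Finset.sum_congr rfl
        intro η _
        ring

/-- Squeeze lemma for ratios of natural number sequences. -/
lemma tendsto_ratio {a b₁ b₂ D : ℕ → ℕ} (c : ℝ) (hc : 0 ≤ c)
    (h : ∀ n, (a n : ℝ) ≤ (b₁ n : ℝ) + c * (b₂ n : ℝ))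
    (h1 : Tendsto (fun n => ((b₁ n : ℝ)) / ((D n : ℝ))) atTop (𝓝 0))
    (h2 : Tendsto (fun n => ((b₂ n : ℝ)) / ((D n : ℝ))) atTop (𝓝 0)) :
    Tendsto (fun n => ((a n : ℝ)) / ((D n : ℝ))) atTop (𝓝 0) := by
  have hup : Tendsto (fun n => (b₁ n : ℝ) / (D n : ℝ) + c * ((b₂ n : ℝ) / (D n : ℝ)))
      atTop (𝓝 0) := by
    have := h1.add (h2.const_mul c)
    simpa using this
  refine tendsto_of_tendsto_of_tendsto_of_le_of_le tendsto_const_nhds hup ?_ ?_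
  · intro n
    positivity
  · intro n
    rcases eq_or_ne ((D n : ℝ)) 0 with hD | hD
    · simp [hD]
    · have hDpos : (0 : ℝ) < (D n : ℝ) := lt_of_le_of_ne (Nat.cast_nonneg _) (Ne.symm hD)
      calc (a n : ℝ) / (D n : ℝ) ≤ ((b₁ n : ℝ) + c * (b₂ n : ℝ)) / (D n : ℝ) :=
            div_le_div_of_nonneg_right (h n) hDpos.le
        _ = (b₁ n : ℝ) / (D n : ℝ) + c * ((b₂ n : ℝ) / (D n : ℝ)) := by
            rw [add_div, mul_div_assoc]

/-- The set `Ĝ_Σ` of irreducibles fixing `Σ` contains the trivial representation, is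
closed under conjugation, and is closed under taking irreducible constituents of tensor
products of its elements; hence it generates a quantum subgroup. -/
theorem stmt17 {ι : Type*} [DecidableEq ι] (N : ι → ι → ι → ℕ) (d : ι → ℕ) (conj : ι → ι)
    (one : ι)
    (hone : ∀ α β, N α one β = if α = β then 1 else 0)
    (hd : ∀ α, 0 < d α)
    (hdconj : ∀ γ, d (conj γ) = d γ)
    (hfrob : ∀ α γ β, N α γ β = N β (conj γ) α)
    (hfrob' : ∀ α γ β, N α γ β = N (conj α) β γ)
    (hfin : ∀ α γ, {β | N α γ β ≠ 0}.Finite)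
    (hfin' : ∀ γ β, {α | N α γ β ≠ 0}.Finite)
    (hdim : ∀ α γ, ∀ S : Finset ι, (∀ β, N α γ β ≠ 0 → β ∈ S) →
      d α * d γ = ∑ β ∈ S, N α γ β * d β)
    (hassoc : ∀ γ₁ γ₂ α β, (∃ γ, N γ₁ γ₂ γ ≠ 0 ∧ N α γ β ≠ 0) ↔
      (∃ η, N α γ₁ η ≠ 0 ∧ N η γ₂ β ≠ 0))
    (hbfin : ∀ (γ : ι) (S : Finset ι), (bdry N γ S).Finite)
    (F : ℕ → Finset ι) :
    RepFixes N d F hbfin one ∧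
      (∀ γ, RepFixes N d F hbfin γ → RepFixes N d F hbfin (conj γ)) ∧
      (∀ γ₁ γ₂ γ, RepFixes N d F hbfin γ₁ → RepFixes N d F hbfin γ₂ →
        N γ₁ γ₂ γ ≠ 0 → RepFixes N d F hbfin γ) := by
  classical
  have mem_bdry : ∀ (γ' : ι) (S : Finset ι) (α : ι),
      α ∈ bdry N γ' S ↔
        ((α ∈ S ∧ ∃ β ∉ S, N α γ' β ≠ 0) ∨ (α ∉ S ∧ ∃ β ∈ S, N α γ' β ≠ 0)) := by
    intro γ' S α
    simp [bdry]
  -- dimension bound from fusion rules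
  have d_le : ∀ β γ α, N β γ α ≠ 0 → d α ≤ d γ * d β := by
    intro β γ α hN
    have hT : ∀ η, N β γ η ≠ 0 → η ∈ (hfin β γ).toFinset :=
      fun η h => (hfin β γ).mem_toFinset.2 h
    have hmem : α ∈ (hfin β γ).toFinset := hT α hN
    calc d α ≤ N β γ α * d α := Nat.le_mul_of_pos_left _ (Nat.pos_of_ne_zero hN)
      _ ≤ ∑ η ∈ (hfin β γ).toFinset, N β γ η * d η :=
          Finset.single_le_sum (f := fun η => N β γ η * d η)
            (fun _ _ => Nat.zero_le _) hmem
      _ = d β * d γ := (hdim β γ _ hT).symm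
      _ = d γ * d β := Nat.mul_comm _ _
  have col_bound : ∀ β γ (S : Finset ι), ∑ α ∈ S, N β γ α * d α ≤ d γ * d β := by
    intro β γ S
    have hT : ∀ η, N β γ η ≠ 0 → η ∈ S ∪ (hfin β γ).toFinset := fun η h =>
      Finset.mem_union_right _ ((hfin β γ).mem_toFinset.2 h)
    calc ∑ α ∈ S, N β γ α * d α ≤ ∑ α ∈ S ∪ (hfin β γ).toFinset, N β γ α * d α :=
          Finset.sum_le_sum_of_subset Finset.subset_union_left
      _ = d β * d γ := (hdim β γ _ hT).symm
      _ = d γ * d β := Nat.mul_comm _ _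
  refine ⟨?_, ?_, ?_⟩
  · -- the trivial representation
    have hone_bdry : ∀ S : Finset ι, bdry N one S = ∅ := by
      intro S
      ext α
      rw [mem_bdry]
      simp only [Set.mem_empty_iff_false, iff_false]
      rintro (⟨hαF, β, hβF, hN⟩ | ⟨hαF, β, hβF, hN⟩)
      · rw [hone] at hN
        rcases eq_or_ne α β with h | h
        · exact hβF (h ▸ hαF)
        · simp [h] at hN
      · rw [hone] at hN
        rcases eq_or_ne α β with h | h
        · exact hαF (h ▸ hβF)
        · simp [h] at hN
    unfold RepFixes
    have heq : (fun n => ((∑ α ∈ (hbfin one (F n)).toFinset, (d α) ^ 2 : ℕ) : ℝ) /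
        ((∑ α ∈ F n, (d α) ^ 2 : ℕ) : ℝ)) = fun _ => (0 : ℝ) := by
      funext n
      rw [Set.Finite.toFinset_eq_empty.2 (hone_bdry (F n))]
      simp
    rw [heq]
    exact tendsto_const_nhds
  · -- conjugation
    intro γ hγ
    unfold RepFixes at hγ ⊢
    have key : ∀ n, ∑ α ∈ (hbfin (conj γ) (F n)).toFinset, d α ^ 2
        ≤ (d γ) ^ 2 * ∑ α ∈ (hbfin γ (F n)).toFinset, d α ^ 2 := by
      intro n
      apply key_sum d (fun α β => N β γ α) (d γ)
      · intro α hα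
        rw [Set.Finite.mem_toFinset, mem_bdry] at hα
        rcases hα with ⟨hαF, β, hβF, hN⟩ | ⟨hαF, β, hβF, hN⟩
        · have hN' : N β γ α ≠ 0 := by rw [hfrob β γ α]; exact hN
          exact ⟨β, (Set.Finite.mem_toFinset _).2 ((mem_bdry γ (F n) β).2
            (Or.inr ⟨hβF, α, hαF, hN'⟩)), hN'⟩
        · have hN' : N β γ α ≠ 0 := by rw [hfrob β γ α]; exact hN
          exact ⟨β, (Set.Finite.mem_toFinset _).2 ((mem_bdry γ (F n) β).2
            (Or.inl ⟨hβF, α, hαF, hN'⟩)), hN'⟩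
      · intro α η hM
        exact d_le η γ α hM
      · intro η
        exact col_bound η γ _
    refine tendsto_ratio (b₁ := fun _ => 0)
      (b₂ := fun n => ∑ α ∈ (hbfin γ (F n)).toFinset, d α ^ 2)
      (((d γ) ^ 2 : ℕ) : ℝ) (by positivity) ?_ ?_ hγ
    · intro n
      simp only [Nat.cast_zero, zero_add]
      exact_mod_cast key n
    · simpa using (tendsto_const_nhds : Tendsto (fun _ : ℕ => (0 : ℝ)) atTop (𝓝 0))
  · -- tensor products
    intro γ₁ γ₂ γ h₁ h₂ hNγ
    unfold RepFixes at h₁ h₂ ⊢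
    have key : ∀ n, ∑ α ∈ (hbfin γ (F n)).toFinset, d α ^ 2 ≤
        (∑ α ∈ (hbfin γ₁ (F n)).toFinset, d α ^ 2) +
          (d γ₁) ^ 2 * ∑ α ∈ (hbfin γ₂ (F n)).toFinset, d α ^ 2 := by
      intro n
      set A := (hbfin γ (F n)).toFinset with hA
      set B₁ := (hbfin γ₁ (F n)).toFinset with hB₁
      set B₂ := (hbfin γ₂ (F n)).toFinset with hB₂
      have hsplit : ∀ α ∈ A, α ∈ B₁ ∨ ∃ η ∈ B₂, N α γ₁ η ≠ 0 := by
        intro α hα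
        rw [hA, Set.Finite.mem_toFinset, mem_bdry] at hα
        by_cases hB : α ∈ B₁
        · exact Or.inl hB
        · right
          rw [hB₁, Set.Finite.mem_toFinset, mem_bdry] at hB
          rcases hα with ⟨hαF, β, hβF, hN⟩ | ⟨hαF, β, hβF, hN⟩
          · obtain ⟨η, hη1, hη2⟩ := (hassoc γ₁ γ₂ α β).1 ⟨γ, hNγ, hN⟩
            by_cases hηF : η ∈ F n
            · exact ⟨η, (Set.Finite.mem_toFinset _).2 ((mem_bdry γ₂ (F n) η).2
                (Or.inl ⟨hηF, β, hβF, hη2⟩)), hη1⟩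
            · exact absurd (Or.inl ⟨hαF, η, hηF, hη1⟩) hB
          · obtain ⟨η, hη1, hη2⟩ := (hassoc γ₁ γ₂ α β).1 ⟨γ, hNγ, hN⟩
            by_cases hηF : η ∈ F n
            · exact absurd (Or.inr ⟨hαF, η, hηF, hη1⟩) hB
            · exact ⟨η, (Set.Finite.mem_toFinset _).2 ((mem_bdry γ₂ (F n) η).2
                (Or.inr ⟨hηF, β, hβF, hη2⟩)), hη1⟩
      have hsum : ∑ α ∈ A, d α ^ 2 =
          ∑ α ∈ A.filter (· ∈ B₁), d α ^ 2 + ∑ α ∈ A.filter (· ∉ B₁), d α ^ 2 :=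
        (Finset.sum_filter_add_sum_filter_not A _ _).symm
      rw [hsum]
      apply Nat.add_le_add
      · exact Finset.sum_le_sum_of_subset (fun x hx => (Finset.mem_filter.1 hx).2)
      · apply key_sum d (fun α η => N α γ₁ η) (d γ₁)
        · intro α hα
          have hα' := Finset.mem_filter.1 hα
          rcases hsplit α hα'.1 with h | h
          · exact absurd h hα'.2
          · exact h
        · intro α η hM
          have hM' : N η (conj γ₁) α ≠ 0 := by rw [← hfrob α γ₁ η]; exact hM
          have := d_le η (conj γ₁) α hM'
          rwa [hdconj] at this
        · intro η
          calc ∑ α ∈ A.filter (· ∉ B₁), N α γ₁ η * d α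
              = ∑ α ∈ A.filter (· ∉ B₁), N η (conj γ₁) α * d α :=
                Finset.sum_congr rfl (fun α _ => by rw [← hfrob α γ₁ η])
            _ ≤ d (conj γ₁) * d η := col_bound η (conj γ₁) _
            _ = d γ₁ * d η := by rw [hdconj]
    refine tendsto_ratio
      (b₁ := fun n => ∑ α ∈ (hbfin γ₁ (F n)).toFinset, d α ^ 2)
      (b₂ := fun n => ∑ α ∈ (hbfin γ₂ (F n)).toFinset, d α ^ 2)
      (((d γ₁) ^ 2 : ℕ) : ℝ) (by positivity) ?_ h₁ h₂
    intro n
    exact_mod_cast key n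
end

section
/- Let π: C(𝔾) → B(H) be a representation, Σ = {F_n} a sequence of finite subsets of Ĝ, and H_Σ = {x ∈ H : π(χ(α))x = d_α x for all α ∈ ∪F_n} with orthogonal projection P. If T ∈ B(H) is a weak operator topology limit point of the averages T_n = (1/|F_n|_w) Σ_{α∈F_n} d_α π(χ(α)), then TP = PT = P. -/
open Filter Topology ContinuousLinearMap

local notation "⟪" x ", " y "⟫" => @inner ℂ _ _ x y

lemma adjoint_eigen_aux {H : Type*} [NormedAddCommGroup H] [InnerProductSpace ℂ H]
    [CompleteSpace H] (a : H →L[ℂ] H) (c : ℝ) (x : H)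
    (hx : a x = (c : ℂ) • x) (hn : ‖ContinuousLinearMap.adjoint a‖ ≤ c) :
    ContinuousLinearMap.adjoint a x = (c : ℂ) • x := by
  set b := ContinuousLinearMap.adjoint a with hb
  have hc0 : 0 ≤ c := le_trans (norm_nonneg _) hn
  have h1 : ⟪b x, x⟫ = (c : ℂ) * ⟪x, x⟫ := by
    rw [hb, ContinuousLinearMap.adjoint_inner_left, hx, inner_smul_right]
  have h2 : RCLike.re ⟪b x, (c : ℂ) • x⟫ = c * (c * ‖x‖ ^ 2) := by
    rw [inner_smul_right, h1]
    simp [inner_self_eq_norm_sq, ← Complex.ofReal_mul]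
    exact Or.inl (by rw [← Complex.ofReal_pow, Complex.ofReal_re])
  have hnb : ‖b x‖ ≤ c * ‖x‖ := by
    calc ‖b x‖ ≤ ‖b‖ * ‖x‖ := b.le_opNorm x
    _ ≤ c * ‖x‖ := by gcongr
  have hsq : ‖b x - (c : ℂ) • x‖ ^ 2 ≤ 0 := by
    rw [@norm_sub_sq ℂ, h2]
    have : ‖b x‖ ^ 2 ≤ (c * ‖x‖) ^ 2 := by
      apply sq_le_sq' _ hnb
      linarith [norm_nonneg (b x)]
    rw [norm_smul]
    simp only [Complex.norm_real, Real.norm_eq_abs, abs_of_nonneg hc0]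
    nlinarith [norm_nonneg x]
  have h0 : ‖b x - (c : ℂ) • x‖ = 0 :=
    le_antisymm (by nlinarith [norm_nonneg (b x - (c : ℂ) • x)]) (norm_nonneg _)
  rw [← sub_eq_zero]
  exact norm_eq_zero.mp h0

/-- Mean ergodic theorem for discrete quantum groups: let `π : C(𝔾) → B(H)` be a unital
`*`-representation, `Σ = {F_n}` a sequence of nonempty finite subsets of `Ĝ`,
`H_Σ = {x : π(χ(α)) x = d_α x for all α ∈ ∪ F_n}` and `P` the orthogonal projection onto
`H_Σ` (characterized as the self-adjoint operator with range in `H_Σ` fixing `H_Σ`).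
If `T` is a weak-operator-topology limit point of the averages
`T_n = (1/|F_n|_w) ∑_{α ∈ F_n} d_α π(χ(α))` (i.e. a limit along some nontrivial filter
`l ≤ atTop`), then `T P = P T = P`. -/
theorem stmt19 {A : Type*} [NormedRing A] [StarRing A] [CStarRing A] [NormedAlgebra ℂ A]
    {H : Type*} [NormedAddCommGroup H] [InnerProductSpace ℂ H] [CompleteSpace H]
    (π : A →⋆ₐ[ℂ] (H →L[ℂ] H))
    {Ghat : Type*} (χ : Ghat → A) (d : Ghat → ℕ) (conj : Ghat → Ghat)
    (hd : ∀ α, 0 < d α)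
    (hnorm : ∀ α, ‖π (χ α)‖ ≤ (d α : ℝ))
    (hstar : ∀ α, star (χ α) = χ (conj α))
    (hdconj : ∀ α, d (conj α) = d α)
    (F : ℕ → Finset Ghat) (hF : ∀ n, (F n).Nonempty)
    (T P : H →L[ℂ] H)
    (hP1 : IsSelfAdjoint P)
    (hP2 : ∀ x : H, ∀ n, ∀ α ∈ F n, π (χ α) (P x) = (d α : ℂ) • P x)
    (hP3 : ∀ x : H, (∀ n, ∀ α ∈ F n, π (χ α) x = (d α : ℂ) • x) → P x = x)
    (l : Filter ℕ) (hl : l ≤ atTop) [l.NeBot]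
    (hT : ∀ x y : H,
      Tendsto
        (fun n =>
          (inner ℂ ((((∑ α ∈ F n, ((d α : ℂ)) ^ 2)⁻¹ •
            ∑ α ∈ F n, (d α : ℂ) • π (χ α)) : H →L[ℂ] H) x) y : ℂ))
        l (𝓝 (inner ℂ (T x) y : ℂ))) :
    T ∘L P = P ∧ P ∘L T = P := by
  -- the normalizing constant is nonzero
  have hsum : ∀ n, (∑ α ∈ F n, (d α : ℂ) ^ 2) ≠ 0 := by
    intro n
    have : (∑ α ∈ F n, (d α : ℂ) ^ 2) = ((∑ α ∈ F n, (d α) ^ 2 : ℕ) : ℂ) := by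
      push_cast; ring
    rw [this, Ne, Nat.cast_eq_zero]
    obtain ⟨α0, hα0⟩ := hF n
    have : 0 < ∑ α ∈ F n, (d α) ^ 2 :=
      Finset.sum_pos (fun α _ => pow_pos (hd α) 2) ⟨α0, hα0⟩
    omega
  -- the adjoint of π(χ α) also fixes P x with eigenvalue d α
  have hadj : ∀ (x : H) (n : ℕ), ∀ α ∈ F n,
      ContinuousLinearMap.adjoint (π (χ α)) (P x) = (d α : ℂ) • P x := by
    intro x n α hα
    have hadj_eq : ContinuousLinearMap.adjoint (π (χ α)) = π (χ (conj α)) := by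
      rw [← hstar α, map_star, ContinuousLinearMap.star_eq_adjoint]
    apply adjoint_eigen_aux _ (d α) _ (hP2 x n α hα)
    rw [hadj_eq]
    calc ‖π (χ (conj α))‖ ≤ (d (conj α) : ℝ) := hnorm (conj α)
    _ = (d α : ℝ) := by rw [hdconj]
  -- T_n fixes P x
  have factA : ∀ (n : ℕ) (x : H),
      (((∑ α ∈ F n, ((d α : ℂ)) ^ 2)⁻¹ •
        ∑ α ∈ F n, (d α : ℂ) • π (χ α)) : H →L[ℂ] H) (P x) = P x := by
    intro n x
    rw [ContinuousLinearMap.smul_apply, ContinuousLinearMap.sum_apply]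
    have : ∀ α ∈ F n, ((d α : ℂ) • π (χ α)) (P x) = ((d α : ℂ) ^ 2) • P x := by
      intro α hα
      rw [ContinuousLinearMap.smul_apply, hP2 x n α hα, smul_smul, ← pow_two]
    rw [Finset.sum_congr rfl this, ← Finset.sum_smul, smul_smul,
      inv_mul_cancel₀ (hsum n), one_smul]
  -- ⟪T_n x, P y⟫ = ⟪x, P y⟫
  have factB : ∀ (n : ℕ) (x y : H),
      ⟪(((∑ α ∈ F n, ((d α : ℂ)) ^ 2)⁻¹ •
        ∑ α ∈ F n, (d α : ℂ) • π (χ α)) : H →L[ℂ] H) x, P y⟫ = ⟪x, P y⟫ := by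
    intro n x y
    rw [ContinuousLinearMap.smul_apply, ContinuousLinearMap.sum_apply,
      inner_smul_left, sum_inner]
    have : ∀ α ∈ F n, ⟪((d α : ℂ) • π (χ α)) x, P y⟫ = ((d α : ℂ) ^ 2) * ⟪x, P y⟫ := by
      intro α hα
      rw [ContinuousLinearMap.smul_apply, inner_smul_left,
        ← ContinuousLinearMap.adjoint_inner_right, hadj y n α hα, inner_smul_right]
      push_cast
      ring_nf
      rw [Complex.conj_natCast]
      ring
    rw [Finset.sum_congr rfl this, ← Finset.sum_mul, ← mul_assoc]
    have hconj : (starRingEnd ℂ) (∑ α ∈ F n, (d α : ℂ) ^ 2)⁻¹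
        = (∑ α ∈ F n, (d α : ℂ) ^ 2)⁻¹ := by
      rw [map_inv₀, map_sum]
      congr 1
      refine Finset.sum_congr rfl fun α _ => ?_
      rw [map_pow, Complex.conj_natCast]
    rw [hconj, inv_mul_cancel₀ (hsum n), one_mul]
  have hPadj : ContinuousLinearMap.adjoint P = P := by
    rw [← ContinuousLinearMap.star_eq_adjoint]; exact hP1
  have hPinner : ∀ a b : H, ⟪P a, b⟫ = ⟪a, P b⟫ := by
    intro a b
    rw [← hPadj, ContinuousLinearMap.adjoint_inner_left, hPadj]
  constructor
  · ext x
    apply ext_inner_right ℂ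
    intro y
    have h1 := hT (P x) y
    have h2 : Tendsto (fun n : ℕ =>
        (inner ℂ ((((∑ α ∈ F n, ((d α : ℂ)) ^ 2)⁻¹ •
          ∑ α ∈ F n, (d α : ℂ) • π (χ α)) : H →L[ℂ] H) (P x)) y : ℂ))
        l (𝓝 ⟪P x, y⟫) := by
      simp only [factA]
      exact tendsto_const_nhds
    simpa using tendsto_nhds_unique h1 h2
  · ext x
    apply ext_inner_right ℂ
    intro y
    have h1 := hT x (P y)
    have h2 : Tendsto (fun n : ℕ =>
        (inner ℂ ((((∑ α ∈ F n, ((d α : ℂ)) ^ 2)⁻¹ •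
          ∑ α ∈ F n, (d α : ℂ) • π (χ α)) : H →L[ℂ] H) x) (P y) : ℂ))
        l (𝓝 ⟪x, P y⟫) := by
      simp only [factB]
      exact tendsto_const_nhds
    have h3 : ⟪T x, P y⟫ = ⟪x, P y⟫ := tendsto_nhds_unique h1 h2
    calc ⟪(P ∘L T) x, y⟫ = ⟪P (T x), y⟫ := rfl
    _ = ⟪T x, P y⟫ := hPinner _ _
    _ = ⟪x, P y⟫ := h3
    _ = ⟪P x, y⟫ := (hPinner x y).symm
end
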